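/- Let d ≥ 1, let H : ℝ^d → ℝ be continuously differentiable, and let B : ℝ^d → Matrix d d ℝ be continuous with B(y) skew-symmetric for every y. Let Y be a subspace of the continuous real-valued functions on [0,1]. Suppose u : [0,1] → ℝ^d is continuously differentiable with every component of its derivative u' belonging to Y, and g : [0,1] → ℝ^d is continuous such that (i) for every v ∈ Y and every coordinate i, ∫₀¹ v(τ) g_i(τ) dτ = ∫₀¹ v(τ) (∇H(u(τ)))_i dτ, and (ii) u'(τ) = B(u(τ)) · g(τ) for all τ ∈ [0,1]. Then H(u(1)) = H(u(0)). -/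

import Mathlib

open Matrix

/-- **Energy preservation of the FFEP integrator (Theorem 2.4).**
If `u' ∈ Y` componentwise, `g` is the componentwise `L²(0,1)`-projection of `∇H ∘ u`
onto `Y`, and `u' = B(u) g` on `[0,1]` with `B` skew-symmetric, then `H(u 1) = H(u 0)`. -/
theorem ffep_energy_preservation
    (d : ℕ) (hd : 1 ≤ d)
    (H : EuclideanSpace ℝ (Fin d) → ℝ) (hH : ContDiff ℝ 1 H)
    (B : EuclideanSpace ℝ (Fin d) → Matrix (Fin d) (Fin d) ℝ)
    (hBcont : Continuous fun y => (B y : Fin d → Fin d → ℝ))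
    (hBskew : ∀ y, (B y)ᵀ = -(B y))
    (Y : Submodule ℝ (ℝ → ℝ))
    (hY : ∀ v ∈ Y, ContinuousOn v (Set.Icc (0:ℝ) 1))
    (u u' : ℝ → EuclideanSpace ℝ (Fin d))
    (hu : ∀ τ ∈ Set.Icc (0:ℝ) 1, HasDerivWithinAt u (u' τ) (Set.Icc (0:ℝ) 1) τ)
    (hu'cont : ContinuousOn u' (Set.Icc (0:ℝ) 1))
    (hu'Y : ∀ i : Fin d, (fun τ => u' τ i) ∈ Y)
    (g : ℝ → EuclideanSpace ℝ (Fin d))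
    (hgcont : ContinuousOn g (Set.Icc (0:ℝ) 1))
    (hproj : ∀ v ∈ Y, ∀ i : Fin d,
      ∫ τ in (0:ℝ)..1, v τ * g τ i = ∫ τ in (0:ℝ)..1, v τ * gradient H (u τ) i)
    (heq : ∀ τ ∈ Set.Icc (0:ℝ) 1,
      u' τ = (B (u τ)).mulVec (fun i => g τ i)) :
    H (u 1) = H (u 0) := by

  have hucont : ContinuousOn u (Set.Icc (0:ℝ) 1) := fun τ hτ => (hu τ hτ).continuousWithinAt
  have hgrad_cont : Continuous (fun y => gradient H y) := by
    have h1 : Continuous (fderiv ℝ H) := hH.continuous_fderiv one_ne_zero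
    have h2 : Continuous ((InnerProductSpace.toDual ℝ (EuclideanSpace ℝ (Fin d))).symm) :=
      (InnerProductSpace.toDual ℝ (EuclideanSpace ℝ (Fin d))).symm.continuous
    exact h2.comp h1
  set G : ℝ → EuclideanSpace ℝ (Fin d) := fun τ => gradient H (u τ) with hG
  have hGcont : ContinuousOn G (Set.Icc (0:ℝ) 1) := hgrad_cont.comp_continuousOn hucont
  have hφ : ∀ τ ∈ Set.Icc (0:ℝ) 1,
      HasDerivWithinAt (fun t => H (u t)) (inner ℝ (G τ) (u' τ) : ℝ) (Set.Icc (0:ℝ) 1) τ := by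
    intro τ hτ
    have hgr : HasGradientAt H (G τ) (u τ) :=
      ((hH.differentiable one_ne_zero) (u τ)).hasGradientAt
    have hf := hgr.hasFDerivAt.comp_hasDerivWithinAt τ (hu τ hτ)
    simpa [InnerProductSpace.toDual_apply_apply, Function.comp_def] using hf
  have hint : ∫ τ in (0:ℝ)..1, (inner ℝ (G τ) (u' τ) : ℝ) = H (u 1) - H (u 0) := by
    apply intervalIntegral.integral_eq_sub_of_hasDeriv_right_of_le
      (f := fun t => H (u t)) (f' := fun τ => (inner ℝ (G τ) (u' τ) : ℝ)) (by norm_num)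
    · exact fun τ hτ => (hφ τ hτ).continuousWithinAt
    · intro x hx
      exact ((hφ x ⟨hx.1.le, hx.2.le⟩).hasDerivAt (Icc_mem_nhds hx.1 hx.2)).hasDerivWithinAt
    · apply ContinuousOn.intervalIntegrable
      rw [Set.uIcc_of_le (by norm_num : (0:ℝ) ≤ 1)]
      exact hGcont.inner hu'cont
  have hsum : ∀ τ, (inner ℝ (G τ) (u' τ) : ℝ) = ∑ i : Fin d, u' τ i * G τ i := by
    intro τ
    rw [PiLp.inner_apply]
    exact Finset.sum_congr rfl fun i _ => by
      simp [RCLike.inner_apply, mul_comm]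
  have hcontGi : ∀ i : Fin d, ContinuousOn (fun τ => u' τ i * G τ i) (Set.Icc (0:ℝ) 1) :=
    fun i => ((PiLp.continuous_apply (p := 2) (β := fun _ : Fin d => ℝ) i).comp_continuousOn hu'cont).mul
      ((PiLp.continuous_apply (p := 2) (β := fun _ : Fin d => ℝ) i).comp_continuousOn hGcont)
  have hcontgi : ∀ i : Fin d, ContinuousOn (fun τ => u' τ i * g τ i) (Set.Icc (0:ℝ) 1) :=
    fun i => ((PiLp.continuous_apply (p := 2) (β := fun _ : Fin d => ℝ) i).comp_continuousOn hu'cont).mul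
      ((PiLp.continuous_apply (p := 2) (β := fun _ : Fin d => ℝ) i).comp_continuousOn hgcont)
  have hint2 : ∫ τ in (0:ℝ)..1, (inner ℝ (G τ) (u' τ) : ℝ)
      = ∑ i : Fin d, ∫ τ in (0:ℝ)..1, u' τ i * G τ i := by
    simp_rw [hsum]
    apply intervalIntegral.integral_finset_sum
    intro i _
    apply ContinuousOn.intervalIntegrable
    rw [Set.uIcc_of_le (by norm_num : (0:ℝ) ≤ 1)]
    exact hcontGi i
  have hint3 : ∀ i : Fin d, ∫ τ in (0:ℝ)..1, u' τ i * G τ i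
      = ∫ τ in (0:ℝ)..1, u' τ i * g τ i :=
    fun i => (hproj (fun τ => u' τ i) (hu'Y i) i).symm
  have hint4 : ∑ i : Fin d, ∫ τ in (0:ℝ)..1, u' τ i * g τ i
      = ∫ τ in (0:ℝ)..1, (∑ i : Fin d, u' τ i * g τ i) := by
    symm
    apply intervalIntegral.integral_finset_sum
    intro i _
    apply ContinuousOn.intervalIntegrable
    rw [Set.uIcc_of_le (by norm_num : (0:ℝ) ≤ 1)]
    exact hcontgi i
  have hskew : ∀ (M : Matrix (Fin d) (Fin d) ℝ) (x : Fin d → ℝ), Mᵀ = -M →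
      M.mulVec x ⬝ᵥ x = 0 := by
    intro M x hM
    have h : M.mulVec x ⬝ᵥ x = -(M.mulVec x ⬝ᵥ x) := by
      calc M.mulVec x ⬝ᵥ x = x ⬝ᵥ M.mulVec x := dotProduct_comm _ _
        _ = M.vecMul x ⬝ᵥ x := dotProduct_mulVec _ _ _
        _ = Mᵀ.mulVec x ⬝ᵥ x := by rw [Matrix.mulVec_transpose]
        _ = (-M).mulVec x ⬝ᵥ x := by rw [hM]
        _ = -(M.mulVec x ⬝ᵥ x) := by rw [Matrix.neg_mulVec, neg_dotProduct]
    linarith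
  have hzero : ∀ τ ∈ Set.Icc (0:ℝ) 1, (∑ i : Fin d, u' τ i * g τ i) = 0 := by
    intro τ hτ
    have h := heq τ hτ
    have : (∑ i : Fin d, u' τ i * g τ i) = (B (u τ)).mulVec (fun i => g τ i) ⬝ᵥ (fun i => g τ i) := by
      rw [dotProduct]
      exact Finset.sum_congr rfl fun i _ => by rw [congrFun h i]  -- u' τ i = mulVec i
    rw [this]
    exact hskew _ _ (hBskew (u τ))
  have hintzero : ∫ τ in (0:ℝ)..1, (∑ i : Fin d, u' τ i * g τ i) = 0 := by
    rw [intervalIntegral.integral_congr (g := fun _ => (0:ℝ))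
      (by rw [Set.uIcc_of_le (by norm_num : (0:ℝ) ≤ 1)]; exact fun τ hτ => hzero τ hτ)]
    simp
  have : H (u 1) - H (u 0) = 0 := by
    rw [← hint, hint2]
    simp_rw [hint3]
    rw [hint4, hintzero]
  linarith
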